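/- Let Γ be a finite simple graph, let v_i, v_j be vertices with d(v_i, v_j) ≥ 2, and let K be a connected component of Γ \ S_i (where S_i is the closed neighborhood of v_i) and Q a connected component of Γ \ S_j. If v_j ∉ K and K ∩ Q ≠ ∅, then K ⊆ Q. -/

import Mathlib

/-- The star (closed neighborhood) of a vertex. -/
def gstar {V : Type*} (G : SimpleGraph V) (v : V) : Set V := {u | u = v ∨ G.Adj v u}

/-- `K` is a connected component of the induced subgraph of `G` on the set `s`. -/
def IsCompOf {V : Type*} (G : SimpleGraph V) (s K : Set V) : Prop :=
  K.Nonempty ∧ K ⊆ s ∧ (G.induce K).Connected ∧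
    ∀ K' : Set V, K ⊆ K' → K' ⊆ s → (G.induce K').Connected → K' = K

lemma induce_singleton_connected {V : Type*} (G : SimpleGraph V) (v : V) :
    (G.induce ({v} : Set V)).Connected := by
  have : Nonempty ({v} : Set V) := ⟨⟨v, rfl⟩⟩
  constructor
  intro a b
  have : a = b := Subtype.ext (by
    have ha := a.2; have hb := b.2
    simp only [Set.mem_singleton_iff] at ha hb
    rw [ha, hb])
  exact this ▸ SimpleGraph.Reachable.refl _

theorem stmt0 {V : Type*} [Fintype V] (G : SimpleGraph V) (i j : V)
    (hne : i ≠ j) (hnadj : ¬ G.Adj i j)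
    (K Q : Set V)
    (hK : IsCompOf G ((gstar G i)ᶜ) K) (hQ : IsCompOf G ((gstar G j)ᶜ) Q)
    (hjK : j ∉ K) (hKQ : (K ∩ Q).Nonempty) :
    K ⊆ Q := by
  obtain ⟨hKne, hKsub, hKconn, hKmax⟩ := hK
  obtain ⟨hQne, hQsub, hQconn, hQmax⟩ := hQ
  -- Step 1 : K ⊆ (gstar G j)ᶜ
  have hKj : K ⊆ (gstar G j)ᶜ := by
    intro u hu
    intro hugs
    rcases hugs with rfl | hadj
    · exact hjK hu
    · -- j is adjacent to u ∈ K; then K ∪ {j} is connected subset of (gstar i)ᶜ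
      have hji : j ∈ (gstar G i)ᶜ := by
        intro h
        rcases h with rfl | h
        · exact hne rfl
        · exact hnadj h
      have hconn : (G.induce (K ∪ {j})).Connected :=
        SimpleGraph.connected_induce_union hKconn.preconnected
          (induce_singleton_connected G j).preconnected hu rfl hadj.symm
      have := hKmax (K ∪ {j}) (Set.subset_union_left)
        (Set.union_subset hKsub (by simpa using hji)) hconn
      apply hjK
      rw [← this]
      exact Set.mem_union_right _ rfl
  -- Step 2 : K ∪ Q is connected subset of (gstar j)ᶜ
  have hconn : (G.induce (K ∪ Q)).Connected :=
    SimpleGraph.induce_union_connected hKconn.preconnected hQconn.preconnected hKQ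
  have := hQmax (K ∪ Q) Set.subset_union_right (Set.union_subset hKj hQsub) hconn
  rw [← this]
  exact Set.subset_union_left
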